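/- Let p be a prime and A = W(𝔽̄_p)((h))^∧_p. The unique root α* ∈ A of w(h,α) = (α - p)(α + (-1)^p)^p - (h - p² + (-1)^p)α satisfies α* ≡ (-1)^{p+1}·p·h^{-1} (mod p²). -/

import Mathlib

set_option maxHeartbeats 1600000
set_option synthInstance.maxHeartbeats 400000

/-- The Laurent series ring `W(𝔽̄_p)((h))` over the Witt vectors of `𝔽̄_p`. -/
noncomputable abbrev WLaurent (p : ℕ) [Fact p.Prime] :=
  LaurentSeries (WittVector p (AlgebraicClosure (ZMod p)))

/-- `A = W(𝔽̄_p)((h))^∧_p`, the `p`-completion of `W(𝔽̄_p)((h))`. -/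
noncomputable abbrev ACompl (p : ℕ) [Fact p.Prime] :=
  AdicCompletion (Ideal.span {(p : WLaurent p)}) (WLaurent p)

/-- The element `h` of `A`. -/
noncomputable def hElt (p : ℕ) [Fact p.Prime] : ACompl p :=
  algebraMap (WLaurent p) (ACompl p) (HahnSeries.single 1 1)

/-- The element `h⁻¹` of `A` (the image of the Laurent series `h⁻¹`). -/
noncomputable def hInv (p : ℕ) [Fact p.Prime] : ACompl p :=
  algebraMap (WLaurent p) (ACompl p) (HahnSeries.single (-1) 1)

/-- `α` is a root of `w(h,α) = (α - p)(α + (-1)^p)^p - (h - p² + (-1)^p)α` in `A`. -/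
def IsWRoot (p : ℕ) [Fact p.Prime] (α : ACompl p) : Prop :=
  (α - p) * (α + (-1) ^ p) ^ p - (hElt p - p ^ 2 + (-1) ^ p) * α = 0

section Aux

/-- In any commutative ring, `(x + e)^(n+1) = e^(n+1) + (n+1)·x·e^n` modulo `x^2`. -/
lemma aux_pow {S : Type*} [CommRing S] (x e : S) :
    ∀ n : ℕ, ∃ t : S, (x + e) ^ (n + 1) =
      e ^ (n + 1) + ((n : S) + 1) * (x * e ^ n) + x ^ 2 * t := by
  intro n
  induction n with
  | zero => exact ⟨0, by ring⟩
  | succ n ih =>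
    obtain ⟨t, ht⟩ := ih
    refine ⟨((n : S) + 1) * e ^ n + (x + e) * t, ?_⟩
    have : (x + e) ^ (n + 1 + 1) = (x + e) * (x + e) ^ (n + 1) := by ring
    rw [this, ht]
    push_cast
    ring

lemma neg_one_pow_pow {S : Type*} [CommRing S] (p : ℕ) (hp : p.Prime) :
    ((-1 : S) ^ p) ^ p = (-1 : S) ^ p := by
  rcases hp.eq_two_or_odd' with rfl | hodd
  · norm_num
  · rw [hodd.neg_one_pow, hodd.neg_one_pow]

lemma smul_top_eq_ideal {R : Type*} [CommRing R] (J : Ideal R) : (J • ⊤ : Ideal R) = J := by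
  ext x; simp

open AdicCompletion in
lemma adic_dvd_of_dvd_one {R : Type*} [CommRing R] (r : R)
    (hreg : ∀ a : R, r * a = 0 → a = 0)
    (f : AdicCauchySequence (Ideal.span {r}) R) (h1 : r ∣ f 1) :
    algebraMap R (AdicCompletion (Ideal.span {r}) R) r ∣ AdicCompletion.mk _ _ f := by
  have hdvd : ∀ n : ℕ, r ∣ f (n + 1) := by
    intro n
    have hc := f.property (show 1 ≤ n + 1 by omega)
    rw [SModEq.sub_mem] at hc
    have hc' : r ∣ (f 1 : R) - f (n + 1) := by
      rw [← Ideal.mem_span_singleton]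
      simpa [smul_top_eq_ideal] using hc
    have : (f (n+1) : R) = f 1 - (f 1 - f (n+1)) := by ring
    rw [this]
    exact dvd_sub h1 hc'
  choose c hc using hdvd
  have hcauchy : ∀ {m n : ℕ}, m ≤ n →
      c m ≡ c n [SMOD ((Ideal.span {r}) ^ m • ⊤ : Ideal R)] := by
    intro m n hmn
    rw [SModEq.sub_mem, smul_top_eq_ideal, Ideal.span_singleton_pow,
      Ideal.mem_span_singleton]
    have hf := f.property (show m + 1 ≤ n + 1 by omega)
    rw [SModEq.sub_mem] at hf
    have hf' : r ^ (m + 1) ∣ (f (m+1) : R) - f (n+1) := by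
      rw [← Ideal.mem_span_singleton, ← Ideal.span_singleton_pow]
      simpa [smul_top_eq_ideal] using hf
    obtain ⟨t, ht⟩ := hf'
    refine ⟨t, ?_⟩
    have h0 : r * (c m - c n - r ^ m * t) = 0 := by
      have hrc : r * (c m - c n) = f (m+1) - f (n+1) := by
        rw [hc m, hc n]; ring
      have he : r * (c m - c n - r ^ m * t) = r * (c m - c n) - r ^ (m + 1) * t := by
        ring
      rw [he, hrc, ht, sub_self]
    have := hreg _ h0
    linear_combination this
  refine ⟨AdicCompletion.mk _ _ ⟨c, hcauchy⟩, ?_⟩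
  ext n
  have hval : (algebraMap R (AdicCompletion (Ideal.span {r}) R) r).val n *
      (AdicCompletion.mk (Ideal.span {r}) R ⟨c, hcauchy⟩).val n =
      Submodule.mkQ ((Ideal.span {r}) ^ n • ⊤ : Submodule R R) (r * c n) := rfl
  rw [AdicCompletion.val_mul, hval, ← hc n]
  exact f.property (Nat.le_succ n)

variable (p : ℕ) [Fact p.Prime]

local notation "K" => AlgebraicClosure (ZMod p)
local notation "W" => WittVector p (AlgebraicClosure (ZMod p))

lemma witt_dvd_of_coeff_zero (x : W) (hx : WittVector.constantCoeff x = 0) :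
    (p : W) ∣ x := by
  rcases eq_or_ne x 0 with rfl | hne
  · exact dvd_zero _
  obtain ⟨m, b, hb0, rfl⟩ := WittVector.exists_eq_pow_p_mul x hne
  rcases m with _ | m
  · exfalso
    apply hb0
    simpa using hx
  · exact Dvd.dvd.mul_right (dvd_pow_self _ (Nat.succ_ne_zero m)) b

/-- Coefficientwise residue map `W((h)) →+* k((h))`. -/
noncomputable def psi : LaurentSeries W →+* LaurentSeries K where
  toFun f := f.map (WittVector.constantCoeff : W →+* K)
  map_one' := HahnSeries.map_one (WittVector.constantCoeff : W →+* K).toMonoidWithZeroHom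
  map_mul' x y := HahnSeries.map_mul (WittVector.constantCoeff : W →+* K).toNonUnitalRingHom
  map_zero' := by
    ext g
    simp only [HahnSeries.map_coeff, HahnSeries.coeff_zero, map_zero]
  map_add' x y := HahnSeries.map_add (WittVector.constantCoeff : W →+* K).toAddMonoidHom

lemma psi_coeff (f : LaurentSeries W) (g : ℤ) :
    (psi p f).coeff g = WittVector.constantCoeff (f.coeff g) := by
  simp [psi, HahnSeries.map_coeff]
  rfl

lemma psi_single (a : ℤ) (r : W) : psi p (HahnSeries.single a r) =
    HahnSeries.single a (WittVector.constantCoeff r) := by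
  ext g
  rw [psi_coeff]
  rcases eq_or_ne g a with rfl | hne
  · simp
  · simp [HahnSeries.coeff_single_of_ne hne]

lemma p_ne_zero_L : (p : LaurentSeries W) ≠ 0 := by
  rw [← map_natCast (HahnSeries.C : W →+* LaurentSeries W) p]
  exact HahnSeries.C_ne_zero (WittVector.p_nonzero p _)

lemma p_reg_L : ∀ a : LaurentSeries W, (p : LaurentSeries W) * a = 0 → a = 0 := by
  intro a ha
  rcases mul_eq_zero.mp ha with h | h
  · exact absurd h (p_ne_zero_L p)
  · exact h

lemma psi_natCast_p : psi p (p : LaurentSeries W) = 0 := by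
  rw [map_natCast, ← map_natCast (HahnSeries.C : K →+* LaurentSeries K) p,
    CharP.cast_eq_zero, map_zero]

lemma dvd_of_psi_eq_zero (f : LaurentSeries W) (hf : psi p f = 0) :
    (p : LaurentSeries W) ∣ f := by
  have hdvd : ∀ g : ℤ, (p : W) ∣ f.coeff g := by
    intro g
    apply witt_dvd_of_coeff_zero
    have := congrArg (fun x => HahnSeries.coeff x g) hf
    simpa [psi_coeff] using this
  choose c hc using hdvd
  have hsupp : (Function.support c) ⊆ f.support := by
    intro g hg
    simp only [Function.mem_support, ne_eq] at hg
    intro h0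
    apply hg
    have : (p : W) * c g = 0 := by rw [← hc g, h0]
    rcases mul_eq_zero.mp this with h | h
    · exact absurd h (WittVector.p_nonzero p _)
    · exact h
  refine ⟨⟨c, f.isPWO_support.mono hsupp⟩, ?_⟩
  ext g
  rw [← map_natCast (HahnSeries.C : W →+* LaurentSeries W) p, HahnSeries.C_mul_eq_smul]
  simp [hc g, HahnSeries.coeff_smul]

/-- The root of `a * ((a + e)^p - (h + e)) = 0` with `a ≠ 0` would force `a^p = h`,
impossible by order considerations. -/
lemma laurent_factor_zero (a : LaurentSeries K)
    (h : (a - (p : LaurentSeries K)) * (a + (-1) ^ p) ^ p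
      - (HahnSeries.single 1 1 - (p : LaurentSeries K) ^ 2 + (-1) ^ p) * a = 0) : a = 0 := by
  haveI : CharP (LaurentSeries K) p :=
    charP_of_injective_ringHom (HahnSeries.C_injective (Γ := ℤ) (R := K)) p
  rw [CharP.cast_eq_zero (LaurentSeries K) p] at h
  have h' : a * ((a + (-1) ^ p) ^ p - (HahnSeries.single 1 1 + (-1) ^ p)) = 0 := by
    linear_combination h
  rcases mul_eq_zero.mp h' with h0 | h0
  · exact h0
  · exfalso
    have hsum : (a + (-1) ^ p) ^ p = a ^ p + ((-1 : LaurentSeries K) ^ p) ^ p :=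
      add_pow_char _ _ _
    have he : ((-1 : LaurentSeries K) ^ p) ^ p = (-1) ^ p :=
      neg_one_pow_pow p Fact.out
    have hap : a ^ p = HahnSeries.single (1 : ℤ) (1 : K) := by
      have h1 := sub_eq_zero.mp h0
      rw [hsum, he] at h1
      exact add_right_cancel h1
    have horder := congrArg HahnSeries.order hap
    rw [HahnSeries.order_pow, HahnSeries.order_single one_ne_zero] at horder
    have hmul : (p : ℤ) * a.order = 1 := by simpa [nsmul_eq_mul] using horder
    have hdvd : (p : ℤ) ∣ 1 := ⟨a.order, hmul.symm⟩
    rw [show (1 : ℤ) = ((1 : ℕ) : ℤ) from rfl, Int.natCast_dvd_natCast] at hdvd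
    exact (Fact.out : p.Prime).one_lt.ne' (Nat.dvd_one.mp hdvd)

end Aux

section Rho

variable (p : ℕ) [Fact p.Prime]

local notation "K" => AlgebraicClosure (ZMod p)

open AdicCompletion

/-- Reduction modulo `p` from `A` to `𝔽̄_p((h))`. -/
noncomputable def rho : ACompl p →+* LaurentSeries K :=
  (Ideal.Quotient.lift (Ideal.span {(p : WLaurent p)}) (psi p) (by
      intro a ha
      rw [Ideal.mem_span_singleton] at ha
      obtain ⟨b, rfl⟩ := ha
      rw [map_mul, psi_natCast_p, zero_mul])).comp
    ((Ideal.quotEquivOfEq (pow_one (Ideal.span {(p : WLaurent p)}))).toRingHom.comp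
      (evalₐ (Ideal.span {(p : WLaurent p)}) 1).toRingHom)

lemma rho_mk (f : AdicCauchySequence (Ideal.span {(p : WLaurent p)}) (WLaurent p)) :
    rho p (AdicCompletion.mk _ _ f) = psi p (f 1) := by
  simp [rho, Ideal.quotEquivOfEq_mk]

lemma rho_algebraMap (x : WLaurent p) :
    rho p (algebraMap (WLaurent p) (ACompl p) x) = psi p x := by
  simp [rho, AlgHom.commutes, Ideal.Quotient.algebraMap_eq, Ideal.quotEquivOfEq_mk]

lemma dvd_of_rho_eq_zero (x : ACompl p) (hx : rho p x = 0) : (p : ACompl p) ∣ x := by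
  induction x using AdicCompletion.induction_on with
  | h f =>
    rw [rho_mk] at hx
    have h1 : (p : WLaurent p) ∣ f 1 := dvd_of_psi_eq_zero p _ hx
    have := adic_dvd_of_dvd_one (p : WLaurent p) (p_reg_L p) f h1
    rwa [map_natCast] at this

lemma rho_hElt : rho p (hElt p) = HahnSeries.single (1 : ℤ) (1 : K) := by
  rw [hElt, rho_algebraMap, psi_single, map_one]

lemma hInv_mul_hElt : hInv p * hElt p = 1 := by
  rw [hInv, hElt, ← map_mul, HahnSeries.single_mul_single]
  norm_num

end Rho

/-- The unique root `α*` of `w(h,·)` in `A = W(𝔽̄_p)((h))^∧_p` satisfies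
`α* ≡ (-1)^{p+1}·p·h⁻¹ (mod p²)`. -/
theorem stmt9 (p : ℕ) [Fact p.Prime] :
    ∀ α : ACompl p, IsWRoot p α →
      (p : ACompl p) ^ 2 ∣ (α - (-1) ^ (p + 1) * p * hInv p) := by
  intro α hroot
  rw [IsWRoot] at hroot
  -- Step A : p ∣ α
  have hdvd : (p : ACompl p) ∣ α := by
    apply dvd_of_rho_eq_zero
    apply laurent_factor_zero p
    have hmap := congrArg (rho p) hroot
    simp only [map_sub, map_mul, map_pow, map_add, map_natCast, map_neg, map_one, map_zero,
      rho_hElt] at hmap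
    exact hmap
  -- Step B
  obtain ⟨β, rfl⟩ := hdvd
  set P : ACompl p := (p : ACompl p) with hP
  set e : ACompl p := (-1) ^ p with hE
  -- binomial expansion
  obtain ⟨t, ht⟩ := aux_pow (P * β) e (p - 1)
  rw [show p - 1 + 1 = p from Nat.succ_pred_eq_of_pos (Fact.out : p.Prime).pos] at ht
  have hcast : ((p - 1 : ℕ) : ACompl p) + 1 = P := by
    rw [Nat.cast_sub (Fact.out : p.Prime).one_le]
    push_cast
    ring
  rw [hcast] at ht
  have hee : e ^ p = e := by
    rw [hE]
    rcases (Fact.out : p.Prime).eq_two_or_odd' with h2 | hodd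
    · subst h2; norm_num
    · rw [hodd.neg_one_pow, hodd.neg_one_pow]
  rw [hee] at ht
  -- ht : (P*β + e)^p = e + P*(P*β*e^(p-1)) + (P*β)^2 * t
  have hinv : hInv p * hElt p = 1 := hInv_mul_hElt p
  refine ⟨hInv p * ((P * β) * (β * e ^ (p - 1) + β ^ 2 * t)
      - P * (β * e ^ (p - 1) + β ^ 2 * t) + P * β), ?_⟩
  rw [hE] at ht ⊢
  linear_combination (-(hInv p)) * hroot + (hInv p * (P * β - (p : ACompl p))) * ht
    - ((p : ACompl p) * β) * hinv
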